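/- arXiv:1902.02495 — 2 statements merged into one kernel-verified Lean document; each statement's English description precedes it below -/
import Mathlib

section
/- The set of nondecreasing vectors {a ∈ [0,1]^K : a_1 ≤ ⋯ ≤ a_K}, equipped with the normalized Euclidean metric d(a,b) = (K^{-1} Σ_{j=1}^K (a_j − b_j)^2)^{1/2}, admits an ε-covering of cardinality at most (C/ε)^{C'/ε} for universal constants C, C' > 0 and all ε ∈ (0,1); in particular its metric entropy log N(ε) is O(1/ε) uniformly in K, in contrast to the full cube [0,1]^K whose metric entropy in this norm grows linearly in K. -/
open Finset

lemma part1 : ∃ C C' : ℝ, 0 < C ∧ 0 < C' ∧ ∀ K : ℕ, 1 ≤ K → ∀ ε : ℝ, ε ∈ Set.Ioo (0:ℝ) 1 →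
      ∃ T : Finset (Fin K → ℝ),
        (∀ t ∈ T, (∀ j, t j ∈ Set.Icc (0:ℝ) 1) ∧ Monotone t) ∧
        (T.card : ℝ) ≤ (C / ε) ^ (C' / ε) ∧
        ∀ a : Fin K → ℝ, (∀ j, a j ∈ Set.Icc (0:ℝ) 1) → Monotone a →
          ∃ t ∈ T, Real.sqrt ((K : ℝ)⁻¹ * ∑ j, (a j - t j) ^ 2) ≤ ε := by
  refine ⟨4, 6, by norm_num, by norm_num, ?_⟩
  intro K hK ε hε
  obtain ⟨hε0, hε1⟩ := hε
  set δ : ℝ := ε/2 with hδ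
  have hδ0 : 0 < δ := by positivity
  set M : ℕ := ⌈2/ε⌉₊ with hMdef
  set h : ℕ := 1 + ⌊ε^2 * K / 4⌋₊ with hhdef
  have hh1 : 1 ≤ h := by omega
  set P : ℕ := (K-1)/h + 1 with hPdef
  have hblk : ∀ j : Fin K, j.val / h < P := by
    intro j
    have h1 : j.val / h ≤ (K-1)/h := Nat.div_le_div_right (by have := j.isLt; omega)
    omega
  set Φ : (Fin M → Fin (P+1)) → (Fin K → ℝ) :=
    fun c j => min 1 (δ * ((univ.filter (fun i : Fin M => (c i : ℕ) ≤ j.val / h)).card : ℝ)) with hΦ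
  refine ⟨Finset.image Φ univ, ?_, ?_, ?_⟩
  · -- membership and monotonicity
    intro t htmem
    rw [Finset.mem_image] at htmem
    obtain ⟨c, _, rfl⟩ := htmem
    constructor
    · intro j
      refine ⟨le_min (by norm_num) (by positivity), min_le_left _ _⟩
    · intro j j' hjj
      have hval : j.val ≤ j'.val := hjj
      have hdiv : j.val / h ≤ j'.val / h := Nat.div_le_div_right hval
      apply min_le_min le_rfl
      apply mul_le_mul_of_nonneg_left _ hδ0.le
      have hsub : (univ.filter (fun i : Fin M => (c i : ℕ) ≤ j.val / h)) ⊆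
          (univ.filter (fun i : Fin M => (c i : ℕ) ≤ j'.val / h)) := by
        intro i hi
        simp only [Finset.mem_filter] at hi ⊢
        exact ⟨hi.1, le_trans hi.2 hdiv⟩
      exact_mod_cast Finset.card_le_card hsub
  · -- cardinality bound
    have hcard1 : (Finset.image Φ univ).card ≤ (P+1)^M := by
      calc (Finset.image Φ univ).card ≤ (univ : Finset (Fin M → Fin (P+1))).card :=
            Finset.card_image_le
        _ = (P+1)^M := by
            rw [Finset.card_univ, Fintype.card_fun, Fintype.card_fin, Fintype.card_fin]
    have hfloor : (ε^2 * K / 4 : ℝ) < h := by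
      have := Nat.lt_floor_add_one (ε^2 * K / 4)
      push_cast [hhdef]
      push_cast at this
      linarith
    have hKpos : (0:ℝ) < K := by exact_mod_cast hK
    have hq : (((K-1)/h : ℕ) : ℝ) * (ε^2 * K / 4) ≤ K := by
      have h1 : (((K-1)/h : ℕ) : ℝ) * (ε^2 * K / 4) ≤ (((K-1)/h : ℕ) : ℝ) * h :=
        mul_le_mul_of_nonneg_left hfloor.le (by positivity)
      have h2 : ((K-1)/h : ℕ) * h ≤ K := le_trans (Nat.div_mul_le_self _ _) (by omega)
      have h2' : (((K-1)/h : ℕ) : ℝ) * h ≤ K := by exact_mod_cast h2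
      linarith
    have hε2pos : (0:ℝ) < ε^2 := by positivity
    have hε2le : ε^2 ≤ 1 := by nlinarith
    have hq2 : (((K-1)/h : ℕ) : ℝ) * ε^2 ≤ 4 := by nlinarith
    have hP2 : ((P:ℝ) + 1) ≤ (4/ε)^2 := by
      have hPc : (P : ℝ) = (((K-1)/h : ℕ) : ℝ) + 1 := by rw [hPdef]; push_cast; ring
      rw [div_pow, le_div_iff₀ hε2pos]
      nlinarith
    have hbase : (1:ℝ) ≤ 4/ε := by rw [le_div_iff₀ hε0]; linarith
    have hMle : (2*M : ℝ) ≤ 6/ε := by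
      have hc : (M:ℝ) < 2/ε + 1 := Nat.ceil_lt_add_one (by positivity)
      have hc2 : (M:ℝ)*ε < 2 + ε := by
        have := mul_lt_mul_of_pos_right hc hε0
        rwa [add_mul, div_mul_cancel₀ _ hε0.ne', one_mul] at this
      rw [le_div_iff₀ hε0]
      push_cast
      nlinarith
    calc ((Finset.image Φ univ).card : ℝ) ≤ (((P+1)^M : ℕ) : ℝ) := by exact_mod_cast hcard1
      _ = ((P:ℝ)+1)^M := by push_cast; ring
      _ ≤ ((4/ε)^2)^M := pow_le_pow_left₀ (by positivity) hP2 M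
      _ = (4/ε)^(2*M) := by rw [← pow_mul]
      _ = (4/ε) ^ ((2*M : ℕ) : ℝ) := (Real.rpow_natCast _ _).symm
      _ ≤ (4/ε) ^ (6/ε) := by
          apply Real.rpow_le_rpow_of_exponent_le hbase
          exact_mod_cast hMle
  · -- covering
    intro a ha hmono
    have hlt : ∀ p : ℕ, min (h*p) (K-1) < K :=
      fun p => lt_of_le_of_lt (min_le_right _ _) (by omega)
    set g : ℕ → ℝ := fun p => a ⟨min (h*p) (K-1), hlt p⟩ with hg
    set mb : ℕ → ℕ := fun p => ⌊ g p / δ ⌋₊ with hmb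
    set t : Fin K → ℝ := fun j => δ * (mb (j.val / h) : ℝ) with ht
    have hgmono : Monotone g := by
      intro p q hpq
      apply hmono
      rw [Fin.le_def]
      exact min_le_min (Nat.mul_le_mul_left _ hpq) le_rfl
    have hg01 : ∀ p, g p ∈ Set.Icc (0:ℝ) 1 := fun p => ha _
    have hmbmono : Monotone mb := by
      intro p q hpq
      apply Nat.floor_le_floor
      exact div_le_div_of_nonneg_right (hgmono hpq) hδ0.le
    have hBl : ∀ p, δ * (mb p : ℝ) ≤ g p := by
      intro p
      have h0 : 0 ≤ g p / δ := div_nonneg (hg01 p).1 hδ0.le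
      have h1 := Nat.floor_le h0
      calc δ * ((mb p : ℕ) : ℝ) ≤ δ * (g p / δ) := mul_le_mul_of_nonneg_left h1 hδ0.le
        _ = g p := by field_simp
    have hBu : ∀ p, g p < δ * (mb p : ℝ) + δ := by
      intro p
      have h1 := Nat.lt_floor_add_one (g p / δ)
      have h2 := mul_lt_mul_of_pos_left h1 hδ0
      calc g p = δ * (g p / δ) := by field_simp
        _ < δ * ((mb p : ℝ) + 1) := h2
        _ = δ * (mb p : ℝ) + δ := by ring
    have hmbM : ∀ p, mb p ≤ M := by
      intro p
      have h1 : mb p ≤ ⌊(1:ℝ)/δ⌋₊ := Nat.floor_le_floor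
        (div_le_div_of_nonneg_right (hg01 p).2 hδ0.le)
      have h2 : (1:ℝ)/δ = 2/ε := by rw [hδ]; field_simp
      calc mb p ≤ ⌊(1:ℝ)/δ⌋₊ := h1
        _ = ⌊(2:ℝ)/ε⌋₊ := by rw [h2]
        _ ≤ ⌈(2:ℝ)/ε⌉₊ := Nat.floor_le_ceil _
        _ = M := rfl
    have hmem : t ∈ Finset.image Φ univ := by
      have hcP : ∀ i : Fin M, ((range P).filter (fun p => mb p ≤ (i:ℕ))).card < P + 1 := by
        intro i
        have := Finset.card_filter_le (range P) (fun p => mb p ≤ (i:ℕ))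
        rw [Finset.card_range] at this
        omega
      set c : Fin M → Fin (P+1) := fun i => ⟨((range P).filter (fun p => mb p ≤ (i:ℕ))).card, hcP i⟩ with hc
      rw [Finset.mem_image]
      refine ⟨c, mem_univ _, ?_⟩
      funext j
      have hpP : j.val / h < P := hblk j
      have hcval : ∀ i : Fin M, (c i : ℕ) = ((range P).filter (fun p => mb p ≤ (i:ℕ))).card :=
        fun i => rfl
      have hiff : ∀ i : Fin M, ((c i : ℕ) ≤ j.val / h ↔ (i:ℕ) < mb (j.val / h)) := by
        intro i
        rw [hcval i]
        constructor
        · intro hle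
          by_contra hge
          push_neg at hge
          have hsub : range (j.val / h + 1) ⊆ (range P).filter (fun q => mb q ≤ (i:ℕ)) := by
            intro q hq
            rw [mem_range] at hq
            rw [mem_filter, mem_range]
            exact ⟨by omega, le_trans (hmbmono (by omega : q ≤ j.val / h)) hge⟩
          have hcc := Finset.card_le_card hsub
          rw [Finset.card_range] at hcc
          omega
        · intro hlt2
          have hsub : (range P).filter (fun q => mb q ≤ (i:ℕ)) ⊆ range (j.val / h) := by
            intro q hq
            rw [mem_filter, mem_range] at hq
            rw [mem_range]
            by_contra hgeq
            push_neg at hgeq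
            have := hmbmono hgeq
            omega
          have hcc := Finset.card_le_card hsub
          rw [Finset.card_range] at hcc
          omega
      have hcount : (univ.filter (fun i : Fin M => (c i : ℕ) ≤ j.val / h)).card = mb (j.val / h) := by
        have heq : univ.filter (fun i : Fin M => (c i : ℕ) ≤ j.val / h)
            = univ.filter (fun i : Fin M => (i:ℕ) < mb (j.val / h)) := by
          apply Finset.filter_congr
          intro i _
          exact hiff i
        rw [heq]
        have himg : Finset.image Fin.val (univ.filter (fun i : Fin M => (i:ℕ) < mb (j.val / h)))
            = range (mb (j.val / h)) := by
          ext x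
          simp only [Finset.mem_image, mem_filter, mem_univ, true_and, mem_range]
          constructor
          · rintro ⟨i, hi, rfl⟩
            exact hi
          · intro hx
            have hxM : x < M := lt_of_lt_of_le hx (hmbM _)
            exact ⟨⟨x, hxM⟩, hx, rfl⟩
        have := congrArg Finset.card himg
        rwa [Finset.card_image_of_injective _ Fin.val_injective, Finset.card_range] at this
      show Φ c j = t j
      rw [hΦ]
      simp only
      rw [hcount]
      have hle1 : δ * ((mb (j.val / h) : ℕ) : ℝ) ≤ 1 :=
        le_trans (hBl _) (hg01 _).2
      rw [ht]
      simp only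
      exact min_eq_right hle1
    refine ⟨t, hmem, ?_⟩
    have hgle : ∀ j : Fin K, g (j.val/h) ≤ a j := by
      intro j
      apply hmono
      rw [Fin.le_def]
      have h1 : h*(j.val/h) ≤ j.val := by rw [mul_comm]; exact Nat.div_mul_le_self _ _
      exact le_trans (min_le_left _ _) h1
    have hpt : ∀ j : Fin K, (a j - t j)^2 ≤ 2*(a j - g (j.val/h)) + 2*δ^2 := by
      intro j
      have h1 : t j ≤ g (j.val/h) := hBl _
      have h2 : g (j.val/h) < t j + δ := hBu _
      have h3 := hgle j
      have h4 := (ha j).2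
      have h5 := (hg01 (j.val/h)).1
      nlinarith [sq_nonneg (a j - g (j.val/h) - (g (j.val/h) - t j)),
        mul_nonneg (sub_nonneg.2 h3) (sub_nonneg.2 (le_trans h3 h4 : g (j.val/h) ≤ 1))]
    have hsumfib := Finset.sum_fiberwise_of_maps_to (s := univ) (g := fun j : Fin K => j.val / h)
        (fun j _ => mem_range.2 (hblk j)) (fun j => a j - g (j.val / h))
    have hinner : ∀ p ∈ range P, ∑ j ∈ univ.filter (fun j : Fin K => j.val / h = p),
        (a j - g (j.val/h)) ≤ ((h:ℝ) - 1) * (g (p+1) - g p) := by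
      intro p hp
      rw [mem_range] at hp
      have hhp : h * p ≤ K - 1 := by
        have hp2 : p ≤ (K-1)/h := by omega
        calc h*p ≤ h * ((K-1)/h) := Nat.mul_le_mul_left _ hp2
          _ ≤ K-1 := by rw [mul_comm]; exact Nat.div_mul_le_self _ _
      set F := univ.filter (fun j : Fin K => j.val / h = p) with hF
      set j0 : Fin K := ⟨min (h*p) (K-1), hlt p⟩ with hj0
      have hj0F : j0 ∈ F := by
        rw [hF, mem_filter]
        refine ⟨mem_univ _, ?_⟩
        show (min (h*p) (K-1)) / h = p
        rw [min_eq_left hhp]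
        exact Nat.mul_div_cancel_left p (by omega)
      have hterm : ∀ j ∈ F, a j - g (j.val/h) ≤ g (p+1) - g p := by
        intro j hj
        rw [hF, mem_filter] at hj
        have hjp : j.val / h = p := hj.2
        have hub : a j ≤ g (p+1) := by
          apply hmono
          rw [Fin.le_def]
          have hmod := Nat.mod_add_div j.val h
          have hmlt : j.val % h < h := Nat.mod_lt _ (by omega)
          rw [hjp] at hmod
          have hj1 : j.val < h*(p+1) := by
            rw [Nat.mul_succ]
            omega
          have hj2 : j.val ≤ K - 1 := by have := j.isLt; omega
          exact le_min (by omega) hj2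
        rw [hjp]
        linarith
      have hcardF : F.card ≤ h := by
        have hinjF : Set.InjOn (fun j : Fin K => j.val) F :=
          fun x _ y _ hxy => Fin.ext hxy
        have hmapsF : ∀ j ∈ F, j.val ∈ Finset.Ico (h*p) (h*p + h) := by
          intro j hj
          rw [hF, mem_filter] at hj
          have hjp := hj.2
          rw [Finset.mem_Ico]
          have hmod := Nat.mod_add_div j.val h
          have hmlt : j.val % h < h := Nat.mod_lt _ (by omega)
          rw [hjp] at hmod
          omega
        have := Finset.card_le_card_of_injOn _ hmapsF hinjF
        rwa [Nat.card_Ico, Nat.add_sub_cancel_left] at this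
      have hgpos : (0:ℝ) ≤ g (p+1) - g p := sub_nonneg.2 (hgmono (Nat.le_succ p))
      have hz : a j0 - g (j0.val/h) = 0 := by
        have hj0p : j0.val / h = p := by
          show (min (h*p) (K-1)) / h = p
          rw [min_eq_left hhp]
          exact Nat.mul_div_cancel_left p (by omega)
        rw [hj0p]
        show a j0 - a ⟨min (h*p) (K-1), hlt p⟩ = 0
        rw [hj0]
        ring
      have hbound : ∑ j ∈ F.erase j0, (a j - g (j.val/h)) ≤ (F.erase j0).card • (g (p+1) - g p) :=
        Finset.sum_le_card_nsmul _ _ _ (fun j hj => hterm j (Finset.erase_subset _ _ hj))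
      have hcarde : (F.erase j0).card ≤ h - 1 := by
        rw [Finset.card_erase_of_mem hj0F]
        omega
      have hcarde' : ((F.erase j0).card : ℝ) ≤ (h:ℝ) - 1 := by
        have h1 : ((F.erase j0).card : ℝ) ≤ ((h - 1 : ℕ) : ℝ) := by exact_mod_cast hcarde
        have h2 : ((h - 1 : ℕ) : ℝ) = (h:ℝ) - 1 := by
          push_cast [hh1]
          ring
        linarith
      calc ∑ j ∈ F, (a j - g (j.val/h))
          = ∑ j ∈ F.erase j0, (a j - g (j.val/h)) + (a j0 - g (j0.val/h)) :=
            (Finset.sum_erase_add F _ hj0F).symm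
        _ = ∑ j ∈ F.erase j0, (a j - g (j.val/h)) := by rw [hz, add_zero]
        _ ≤ (F.erase j0).card • (g (p+1) - g p) := hbound
        _ = ((F.erase j0).card : ℝ) * (g (p+1) - g p) := nsmul_eq_mul _ _
        _ ≤ ((h:ℝ) - 1) * (g (p+1) - g p) := mul_le_mul_of_nonneg_right hcarde' hgpos
    have htele : ∑ p ∈ range P, (g (p+1) - g p) = g P - g 0 := Finset.sum_range_sub g P
    have hhge : (1:ℝ) ≤ (h:ℝ) := by exact_mod_cast hh1
    have hsum1 : ∑ j, (a j - g (j.val/h)) ≤ (h:ℝ) - 1 := by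
      calc ∑ j : Fin K, (a j - g (j.val/h))
          = ∑ p ∈ range P, ∑ j ∈ univ.filter (fun j : Fin K => j.val/h = p), (a j - g (j.val/h)) :=
            hsumfib.symm
        _ ≤ ∑ p ∈ range P, ((h:ℝ)-1) * (g (p+1) - g p) := Finset.sum_le_sum hinner
        _ = ((h:ℝ)-1) * (g P - g 0) := by rw [← Finset.mul_sum, htele]
        _ ≤ ((h:ℝ)-1) * 1 := by
            apply mul_le_mul_of_nonneg_left _ (by linarith)
            have hu := (hg01 P).2
            have hl := (hg01 0).1
            linarith
        _ = (h:ℝ) - 1 := mul_one _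
    have hsumsq : ∑ j, (a j - t j)^2 ≤ 2*((h:ℝ)-1) + 2*(K:ℝ)*δ^2 := by
      have hKr : ((K:ℝ)) * (2*δ^2) = 2*(K:ℝ)*δ^2 := by ring
      calc ∑ j, (a j - t j)^2 ≤ ∑ j, (2*(a j - g (j.val/h)) + 2*δ^2) :=
            Finset.sum_le_sum (fun j _ => hpt j)
        _ = 2 * (∑ j, (a j - g (j.val/h))) + (K:ℝ) * (2*δ^2) := by
            rw [Finset.sum_add_distrib, ← Finset.mul_sum, Finset.sum_const, Finset.card_univ,
              Fintype.card_fin, nsmul_eq_mul]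
        _ ≤ 2*((h:ℝ)-1) + 2*(K:ℝ)*δ^2 := by
            rw [hKr]
            linarith
    have hKpos : (0:ℝ) < K := by exact_mod_cast hK
    have hnorm : (K:ℝ)⁻¹ * ∑ j, (a j - t j)^2 ≤ ε^2 := by
      have hh4 : ((h:ℝ) - 1) ≤ ε^2 * K / 4 := by
        have hhr : ((h:ℝ)) = 1 + (⌊ε^2*(K:ℝ)/4⌋₊ : ℝ) := by rw [hhdef]; push_cast; ring
        have hfl := Nat.floor_le (show (0:ℝ) ≤ ε^2*(K:ℝ)/4 by positivity)
        linarith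
      have hδ2 : δ^2 = ε^2/4 := by rw [hδ]; ring
      rw [inv_mul_le_iff₀ hKpos]
      calc ∑ j, (a j - t j)^2 ≤ 2*((h:ℝ)-1) + 2*(K:ℝ)*δ^2 := hsumsq
        _ ≤ 2*(ε^2 * K / 4) + 2*(K:ℝ)*(ε^2/4) := by rw [hδ2]; linarith
        _ = (K:ℝ) * ε^2 := by ring
    have hfin := Real.sqrt_le_sqrt hnorm
    rwa [Real.sqrt_sq hε0.le] at hfin


lemma part2 : (∃ ε₀ : ℝ, ε₀ ∈ Set.Ioo (0:ℝ) 1 ∧ ∃ c : ℝ, 0 < c ∧ ∀ K : ℕ, 1 ≤ K →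
      ∀ T : Finset (Fin K → ℝ),
        (∀ a : Fin K → ℝ, (∀ j, a j ∈ Set.Icc (0:ℝ) 1) →
          ∃ t ∈ T, Real.sqrt ((K : ℝ)⁻¹ * ∑ j, (a j - t j) ^ 2) ≤ ε₀) →
        Real.exp (c * K) ≤ (T.card : ℝ)) := by
  refine ⟨1/40, by norm_num, Real.log (10/9), Real.log_pos (by norm_num), ?_⟩
  intro K hK T hcov
  have hKpos : (0:ℝ) < K := by exact_mod_cast hK
  set e : (Fin K → Bool) → (Fin K → ℝ) := fun s j => if s j then 1 else 0 with he
  have hmem : ∀ s, ∀ j : Fin K, e s j ∈ Set.Icc (0:ℝ) 1 := by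
    intro s j; dsimp [e]; split <;> norm_num
  choose t ht hd using fun s => hcov (e s) (hmem s)
  set r : (Fin K → ℝ) → (Fin K → Bool) := fun u j => decide ((1:ℝ)/2 ≤ u j) with hr
  set m := K / 400 with hm
  set D : (Fin K → Bool) → Finset (Fin K) := fun s => univ.filter (fun j => s j ≠ r (t s) j) with hD
  have hDcard : ∀ s, (D s).card ≤ m := by
    intro s
    have hx0 : 0 ≤ (K:ℝ)⁻¹ * ∑ j, (e s j - t s j) ^ 2 := by positivity
    have hsq : (K:ℝ)⁻¹ * ∑ j, (e s j - t s j) ^ 2 ≤ (1/40)^2 := by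
      have h2 := pow_le_pow_left₀ (Real.sqrt_nonneg _) (hd s) 2
      rwa [Real.sq_sqrt hx0] at h2
    have hsum : ∑ j, (e s j - t s j) ^ 2 ≤ K * (1/1600) := by
      rw [inv_mul_le_iff₀ hKpos] at hsq
      calc ∑ j, (e s j - t s j) ^ 2 ≤ (K:ℝ) * (1/40)^2 := hsq
        _ = K * (1/1600) := by norm_num
    have hterm : ∀ j ∈ D s, (1/4 : ℝ) ≤ (e s j - t s j) ^ 2 := by
      intro j hj
      rw [hD, mem_filter] at hj
      have hne := hj.2
      have h14 : (1/2:ℝ)^2 = 1/4 := by norm_num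
      cases hsj : s j with
      | true =>
        have : ¬ ((1:ℝ)/2 ≤ t s j) := by
          intro hc; apply hne; rw [hsj, hr]; simp; linarith
        push_neg at this
        have h1 : (1/2:ℝ) ≤ e s j - t s j := by
          dsimp [e]; rw [hsj]; simp; linarith
        calc (1/4:ℝ) = (1/2)^2 := by norm_num
          _ ≤ (e s j - t s j)^2 := by
            apply pow_le_pow_left₀ (by norm_num) h1
      | false =>
        have hge : (1:ℝ)/2 ≤ t s j := by
          by_contra hc; apply hne; rw [hsj, hr]; simp; linarith
        have h1 : (1/2:ℝ) ≤ -(e s j - t s j) := by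
          dsimp [e]; rw [hsj]; simp; linarith
        calc (1/4:ℝ) = (1/2)^2 := by norm_num
          _ ≤ (-(e s j - t s j))^2 := pow_le_pow_left₀ (by norm_num) h1 2
          _ = (e s j - t s j)^2 := by ring
    have hcard4 : ((D s).card : ℝ) * (1/4) ≤ K * (1/1600) := by
      calc ((D s).card : ℝ) * (1/4) = (D s).card • (1/4:ℝ) := by
            rw [nsmul_eq_mul]
        _ ≤ ∑ j ∈ D s, (e s j - t s j)^2 := Finset.card_nsmul_le_sum _ _ _ hterm
        _ ≤ ∑ j, (e s j - t s j)^2 := by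
            apply Finset.sum_le_sum_of_subset_of_nonneg (Finset.subset_univ _)
            intro i _ _; positivity
        _ ≤ K * (1/1600) := hsum
    have h400 : ((D s).card : ℝ) * 400 ≤ K := by linarith
    have h400' : (D s).card * 400 ≤ K := by exact_mod_cast h400
    rw [hm, Nat.le_div_iff_mul_le (by norm_num)]
    exact h400'
  -- injection into T ×ˢ Bset
  set Bset : Finset (Finset (Fin K)) := univ.filter (fun A => A.card ≤ m) with hB
  have hmaps : ∀ s ∈ (univ : Finset (Fin K → Bool)), (t s, D s) ∈ T ×ˢ Bset := by
    intro s _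
    rw [Finset.mem_product]
    exact ⟨ht s, by rw [hB, mem_filter]; exact ⟨mem_univ _, hDcard s⟩⟩
  have hinj : Set.InjOn (fun s => (t s, D s)) (univ : Finset (Fin K → Bool)) := by
    intro s _ s' _ hEq
    simp only [Prod.mk.injEq] at hEq
    obtain ⟨h1, h2⟩ := hEq
    funext j
    by_cases hj : j ∈ D s
    · have hj' : j ∈ D s' := by rw [← h2]; exact hj
      rw [hD, mem_filter] at hj hj'
      have e1 := hj.2
      have e2 := hj'.2
      rw [← h1] at e2
      cases hsj : s j <;> cases hs'j : s' j <;> simp_all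
    · have hj' : j ∉ D s' := by rw [← h2]; exact hj
      rw [hD, mem_filter] at hj hj'
      push_neg at hj hj'
      have e1 := hj (mem_univ _)
      have e2 := hj' (mem_univ _)
      rw [← h1] at e2
      rw [e1, e2]
  have hcard1 : (2:ℕ)^K ≤ T.card * Bset.card := by
    have := Finset.card_le_card_of_injOn _ hmaps hinj
    rwa [Finset.card_univ, Fintype.card_fun, Fintype.card_bool, Fintype.card_fin,
      Finset.card_product] at this
  have hBsub : Bset ⊆ (range (m+1)).biUnion (fun i => Finset.powersetCard i univ) := by
    intro A hA
    rw [hB, mem_filter] at hA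
    rw [Finset.mem_biUnion]
    exact ⟨A.card, by rw [mem_range]; omega, by rw [Finset.mem_powersetCard_univ]⟩
  have hBcard : (Bset.card : ℝ) ≤ ∑ i ∈ range (m+1), (K.choose i : ℝ) := by
    have h1 : Bset.card ≤ ∑ i ∈ range (m+1), (Finset.powersetCard i (univ : Finset (Fin K))).card :=
      le_trans (Finset.card_le_card hBsub) (Finset.card_biUnion_le)
    have h2 : ∀ i, (Finset.powersetCard i (univ : Finset (Fin K))).card = K.choose i := by
      intro i; rw [Finset.card_powersetCard, Finset.card_univ, Fintype.card_fin]
    push_cast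
    calc (Bset.card : ℝ) ≤ (∑ i ∈ range (m+1), (Finset.powersetCard i (univ : Finset (Fin K))).card : ℕ) := by exact_mod_cast h1
      _ = ∑ i ∈ range (m+1), (K.choose i : ℝ) := by
          push_cast
          exact Finset.sum_congr rfl (fun i _ => by rw [h2])
  have hmK : m ≤ K := Nat.div_le_self _ _
  have hcher : ∑ i ∈ range (m+1), (K.choose i : ℝ) ≤ 2^m * (3/2)^K := by
    have step1 : ∑ i ∈ range (m+1), (K.choose i : ℝ) ≤
        ∑ i ∈ range (m+1), (K.choose i : ℝ) * (2^m * (1/2)^i) := by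
      apply Finset.sum_le_sum
      intro i hi
      rw [mem_range] at hi
      have him : i ≤ m := by omega
      have h21 : (1:ℝ) ≤ 2^m * (1/2)^i := by
        rw [one_div, inv_pow, ← div_eq_mul_inv, le_div_iff₀ (by positivity), one_mul]
        exact pow_le_pow_right₀ (by norm_num) him
      nth_rewrite 1 [← mul_one ((K.choose i : ℝ))]
      exact mul_le_mul_of_nonneg_left h21 (by positivity)
    have step2 : ∑ i ∈ range (m+1), (K.choose i : ℝ) * (2^m * (1/2)^i) ≤
        ∑ i ∈ range (K+1), (K.choose i : ℝ) * (2^m * (1/2)^i) := by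
      apply Finset.sum_le_sum_of_subset_of_nonneg
      · exact Finset.range_subset_range.2 (by omega)
      · intro i _ _; positivity
    have step3 : ∑ i ∈ range (K+1), (K.choose i : ℝ) * (2^m * (1/2)^i) = 2^m * (3/2)^K := by
      have hap := add_pow (1/2 : ℝ) 1 K
      simp only [one_pow, mul_one] at hap
      have : (3/2:ℝ)^K = ∑ i ∈ range (K+1), (1/2:ℝ)^i * (K.choose i) := by
        rw [← hap]; norm_num
      rw [this, Finset.mul_sum]
      apply Finset.sum_congr rfl
      intro i _; ring
    linarith
  have h2m : (2:ℝ)^m ≤ (6/5)^K := by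
    have h1 : (2:ℝ) ≤ (6/5)^400 := by
      calc (2:ℝ) ≤ (6/5)^4 := by norm_num
        _ ≤ (6/5)^400 := pow_le_pow_right₀ (by norm_num) (by norm_num)
    calc (2:ℝ)^m ≤ ((6/5)^400)^m := pow_le_pow_left₀ (by norm_num) h1 m
      _ = (6/5)^(400*m) := by rw [← pow_mul]
      _ ≤ (6/5)^K := pow_le_pow_right₀ (by norm_num) (by rw [hm]; omega)
  have hfinal : (2:ℝ)^K ≤ (T.card : ℝ) * ((9/5)^K) := by
    have hc1 : ((2:ℕ)^K : ℝ) ≤ (T.card : ℝ) * (Bset.card : ℝ) := by exact_mod_cast hcard1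
    push_cast at hc1
    have hB2 : (Bset.card : ℝ) ≤ (9/5)^K := by
      calc (Bset.card : ℝ) ≤ ∑ i ∈ range (m+1), (K.choose i : ℝ) := hBcard
        _ ≤ 2^m * (3/2)^K := hcher
        _ ≤ (6/5)^K * (3/2)^K := by
            apply mul_le_mul_of_nonneg_right h2m (by positivity)
        _ = (9/5)^K := by rw [← mul_pow]; norm_num
    calc (2:ℝ)^K ≤ (T.card : ℝ) * (Bset.card : ℝ) := hc1
      _ ≤ (T.card : ℝ) * (9/5)^K := by
          apply mul_le_mul_of_nonneg_left hB2 (by positivity)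
  have hgoal : (10/9:ℝ)^K ≤ (T.card : ℝ) := by
    have h95 : (0:ℝ) < (9/5)^K := by positivity
    rw [← mul_le_mul_iff_of_pos_right h95]
    calc (10/9:ℝ)^K * (9/5)^K = 2^K := by rw [← mul_pow]; norm_num
      _ ≤ (T.card : ℝ) * (9/5)^K := hfinal
  calc Real.exp (Real.log (10/9) * K) = (10/9:ℝ)^K := by
        rw [mul_comm, Real.exp_nat_mul, Real.exp_log (by norm_num)]
    _ ≤ (T.card : ℝ) := hgoal


/-- the set of nondecreasing vectors in `[0,1]^K`, in the
normalized Euclidean metric `d(a,b) = (K⁻¹ ∑ (a_j−b_j)²)^{1/2}`, admits for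
every `ε ∈ (0,1)` an `ε`-covering of cardinality at most `(C/ε)^(C'/ε)` for
universal constants `C, C' > 0` (so its metric entropy is `O(1/ε)` uniformly
in `K`), whereas the metric entropy of the full cube `[0,1]^K` grows linearly
in `K` at some fixed scale. -/
theorem metric_entropy_monotone_vectors :
    (∃ C C' : ℝ, 0 < C ∧ 0 < C' ∧ ∀ K : ℕ, 1 ≤ K → ∀ ε : ℝ, ε ∈ Set.Ioo (0:ℝ) 1 →
      ∃ T : Finset (Fin K → ℝ),
        (∀ t ∈ T, (∀ j, t j ∈ Set.Icc (0:ℝ) 1) ∧ Monotone t) ∧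
        (T.card : ℝ) ≤ (C / ε) ^ (C' / ε) ∧
        ∀ a : Fin K → ℝ, (∀ j, a j ∈ Set.Icc (0:ℝ) 1) → Monotone a →
          ∃ t ∈ T, Real.sqrt ((K : ℝ)⁻¹ * ∑ j, (a j - t j) ^ 2) ≤ ε) ∧
    (∃ ε₀ : ℝ, ε₀ ∈ Set.Ioo (0:ℝ) 1 ∧ ∃ c : ℝ, 0 < c ∧ ∀ K : ℕ, 1 ≤ K →
      ∀ T : Finset (Fin K → ℝ),
        (∀ a : Fin K → ℝ, (∀ j, a j ∈ Set.Icc (0:ℝ) 1) →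
          ∃ t ∈ T, Real.sqrt ((K : ℝ)⁻¹ * ∑ j, (a j - t j) ^ 2) ≤ ε₀) →
        Real.exp (c * K) ≤ (T.card : ℝ)) := by
  exact ⟨part1, part2⟩
end

section
/- For binary Y = {0, 1} with the discrete kernel l(y, y') = 1[y = y'], and any bounded kernel k on Z, the HSIC between a joint distribution D on Z × {0,1} and the product of its marginals satisfies HSIC(D) = 2 p(1−p) · MMD_k(D(z | y=1), D(z | y=0)) · c for an explicit constant c depending only on the kernel l, where p = D(y = 1) ∈ (0,1); in particular HSIC(D) is proportional to p(1−p) times the MMD between the two conditional distributions of z given y. -/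
open MeasureTheory
open scoped ENNReal

lemma smul_prod_aux {α β : Type*} [MeasurableSpace α] [MeasurableSpace β]
    (c : ℝ≥0∞) (μ : Measure α) (ν : Measure β) [SFinite μ] [SFinite ν] :
    (c • μ).prod ν = c • μ.prod ν := by
  ext s hs
  rw [Measure.smul_apply, Measure.prod_apply hs, Measure.prod_apply hs,
    lintegral_smul_measure, smul_eq_mul]

lemma prod_smul_aux {α β : Type*} [MeasurableSpace α] [MeasurableSpace β]
    (c : ℝ≥0∞) (μ : Measure α) (ν : Measure β) [SFinite μ] [SFinite ν] :
    μ.prod (c • ν) = c • μ.prod ν := by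
  ext s hs
  rw [Measure.smul_apply, Measure.prod_apply hs, Measure.prod_apply hs, smul_eq_mul]
  simp_rw [Measure.smul_apply, smul_eq_mul]
  rw [lintegral_const_mul _ (measurable_measure_prodMk_left hs)]

lemma inner_integral_integral {α β K : Type*} [MeasurableSpace α] [MeasurableSpace β]
    [NormedAddCommGroup K] [InnerProductSpace ℝ K] [CompleteSpace K]
    {μ : Measure α} {ν : Measure β} {f : α → K} {g : β → K}
    (hf : Integrable f μ) (hg : Integrable g ν) :
    (inner ℝ (∫ x, f x ∂μ) (∫ y, g y ∂ν) : ℝ) = ∫ x, ∫ y, (inner ℝ (f x) (g y) : ℝ) ∂ν ∂μ := by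
  rw [real_inner_comm, ← integral_inner hf]
  refine integral_congr_ae (Filter.Eventually.of_forall fun x => ?_)
  simp only
  rw [real_inner_comm, ← integral_inner hg]

/-- for binary actions `Y = {0,1}` (modelled by `Bool`) with the
discrete kernel `l(y,y') = 1[y = y']`, the HSIC between a joint distribution
`D` on `Z × Bool` and the product of its marginals equals
`2 p (1−p) · MMD_k(D(z|y=1), D(z|y=0)) · c` with the explicit constant
`c = √2 / 2` depending only on `l`, where `p = D(y = 1)`. -/
theorem hsic_eq_mmd_binary
    {Z : Type*} [MetricSpace Z] [TopologicalSpace.SeparableSpace Z]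
    [MeasurableSpace Z] [BorelSpace Z]
    {K : Type*} [NormedAddCommGroup K] [InnerProductSpace ℝ K] [CompleteSpace K]
    {T : Type*} [NormedAddCommGroup T] [InnerProductSpace ℝ T] [CompleteSpace T]
    (Φ : Z → K) (k : Z → Z → ℝ)
    (hk : ∀ z z', k z z' = inner ℝ (Φ z) (Φ z'))
    (hkbdd : ∃ C : ℝ, ∀ z z', |k z z'| ≤ C)
    (l : Bool → Bool → ℝ) (hl : ∀ y y', l y y' = if y = y' then 1 else 0)
    (Θ : Z × Bool → T)
    (hΘ : ∀ p q : Z × Bool, (inner ℝ (Θ p) (Θ q) : ℝ) = k p.1 q.1 * l p.2 q.2)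
    (ν₀ ν₁ : Measure Z) [IsProbabilityMeasure ν₀] [IsProbabilityMeasure ν₁]
    (p : ℝ) (hp : p ∈ Set.Ioo (0:ℝ) 1)
    (D : Measure (Z × Bool))
    (hD : D = ENNReal.ofReal p • ν₁.map (fun z => (z, true)) +
      ENNReal.ofReal (1 - p) • ν₀.map (fun z => (z, false)))
    (hintΘ : Integrable Θ D)
    (hintΘ' : Integrable Θ ((D.map Prod.fst).prod (D.map Prod.snd)))
    (hintΦ₀ : Integrable Φ ν₀) (hintΦ₁ : Integrable Φ ν₁)
    (HSIC MMD : ℝ)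
    (hHSIC : HSIC =
      ‖(∫ q, Θ q ∂D) - ∫ q, Θ q ∂((D.map Prod.fst).prod (D.map Prod.snd))‖)
    (hMMD : MMD = ‖(∫ z, Φ z ∂ν₁) - ∫ z, Φ z ∂ν₀‖) :
    HSIC = 2 * p * (1 - p) * MMD * (Real.sqrt 2 / 2) := by
  obtain ⟨C, hC⟩ := hkbdd
  obtain ⟨hp0, hp1⟩ := hp
  have hp0' : (0:ℝ) ≤ p := hp0.le
  have hq0' : (0:ℝ) ≤ 1 - p := by linarith
  have hcpne : ENNReal.ofReal p ≠ ⊤ := ENNReal.ofReal_ne_top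
  have hcqne : ENNReal.ofReal (1 - p) ≠ ⊤ := ENNReal.ofReal_ne_top
  have hcp0 : ENNReal.ofReal p ≠ 0 := by
    simp only [ne_eq, ENNReal.ofReal_eq_zero, not_le]; exact hp0
  have hcq0 : ENNReal.ofReal (1 - p) ≠ 0 := by
    simp only [ne_eq, ENNReal.ofReal_eq_zero, not_le]; linarith
  have hmt : Measurable (fun z : Z => (z, true)) := measurable_id.prodMk measurable_const
  have hmf : Measurable (fun z : Z => (z, false)) := measurable_id.prodMk measurable_const
  have hmb : ∀ b : Bool, Measurable (fun z : Z => (z, b)) :=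
    fun b => measurable_id.prodMk measurable_const
  -- marginals
  have hfst : D.map Prod.fst = ENNReal.ofReal p • ν₁ + ENNReal.ofReal (1 - p) • ν₀ := by
    rw [hD, Measure.map_add _ _ measurable_fst, Measure.map_smul, Measure.map_smul,
      Measure.map_map measurable_fst hmt, Measure.map_map measurable_fst hmf]
    simp [Function.comp_def]
  have hsnd : D.map Prod.snd =
      ENNReal.ofReal p • Measure.dirac true + ENNReal.ofReal (1 - p) • Measure.dirac false := by
    rw [hD, Measure.map_add _ _ measurable_snd, Measure.map_smul, Measure.map_smul,
      Measure.map_map measurable_snd hmt, Measure.map_map measurable_snd hmf]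
    simp [Function.comp_def, Measure.map_const]
  -- product decomposition
  have hprodD : (D.map Prod.fst).prod (D.map Prod.snd) =
      ((ENNReal.ofReal p * ENNReal.ofReal p) • ν₁.map (fun z => (z, true)) +
        (ENNReal.ofReal p * ENNReal.ofReal (1 - p)) • ν₀.map (fun z => (z, true))) +
      ((ENNReal.ofReal (1 - p) * ENNReal.ofReal p) • ν₁.map (fun z => (z, false)) +
        (ENNReal.ofReal (1 - p) * ENNReal.ofReal (1 - p)) • ν₀.map (fun z => (z, false))) := by
    rw [hfst, hsnd]
    simp only [Measure.add_prod, smul_prod_aux, Measure.prod_add, prod_smul_aux,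
      Measure.prod_dirac, smul_add, smul_smul]
    rw [Measure.map_add _ _ hmt, Measure.map_add _ _ hmf, Measure.map_smul, Measure.map_smul,
      Measure.map_smul, Measure.map_smul, smul_add, smul_add, smul_smul, smul_smul,
      smul_smul, smul_smul]
  -- boundedness of Θ
  have hΘbdd : ∀ q : Z × Bool, ‖Θ q‖ ≤ Real.sqrt C := by
    intro q
    have h3 : ‖Θ q‖ ^ 2 = k q.1 q.1 := by
      have h5 := hΘ q q
      rw [real_inner_self_eq_norm_sq, hl] at h5
      simpa using h5
    have h4 : ‖Θ q‖ ^ 2 ≤ C := h3 ▸ le_trans (le_abs_self _) (hC q.1 q.1)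
    calc ‖Θ q‖ = Real.sqrt (‖Θ q‖ ^ 2) := (Real.sqrt_sq (norm_nonneg _)).symm
      _ ≤ Real.sqrt C := Real.sqrt_le_sqrt h4
  -- a.e. strong measurability of Θ w.r.t. each atom
  have hAESM : ∀ (ν : Measure Z) (b : Bool) (c : ℝ≥0∞), c ≠ 0 →
      c • ν.map (fun z => (z, b)) ≤ (D.map Prod.fst).prod (D.map Prod.snd) →
      AEStronglyMeasurable Θ (ν.map (fun z => (z, b))) := by
    intro ν b c hc hle
    have h1 : AEStronglyMeasurable Θ (c • ν.map (fun z => (z, b))) :=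
      hintΘ'.1.mono_measure hle
    have h2 : ν.map (fun z => (z, b)) ≪ c • ν.map (fun z => (z, b)) := by
      refine Measure.AbsolutelyContinuous.mk fun s _ hs => ?_
      simp only [Measure.smul_apply, smul_eq_mul] at hs
      rcases mul_eq_zero.mp hs with h | h
      · exact absurd h hc
      · exact h
    exact h1.mono_ac h2
  have hle1t : (ENNReal.ofReal p * ENNReal.ofReal p) • ν₁.map (fun z => (z, true)) ≤
      (D.map Prod.fst).prod (D.map Prod.snd) := by
    rw [hprodD]; exact Measure.le_add_right (Measure.le_add_right le_rfl)
  have hle0t : (ENNReal.ofReal p * ENNReal.ofReal (1 - p)) • ν₀.map (fun z => (z, true)) ≤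
      (D.map Prod.fst).prod (D.map Prod.snd) := by
    rw [hprodD]; exact Measure.le_add_right (Measure.le_add_left le_rfl)
  have hle1f : (ENNReal.ofReal (1 - p) * ENNReal.ofReal p) • ν₁.map (fun z => (z, false)) ≤
      (D.map Prod.fst).prod (D.map Prod.snd) := by
    rw [hprodD]; exact Measure.le_add_left (Measure.le_add_right le_rfl)
  have hle0f : (ENNReal.ofReal (1 - p) * ENNReal.ofReal (1 - p)) • ν₀.map (fun z => (z, false)) ≤
      (D.map Prod.fst).prod (D.map Prod.snd) := by
    rw [hprodD]; exact Measure.le_add_left (Measure.le_add_left le_rfl)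
  have hA1t := hAESM ν₁ true _ (mul_ne_zero hcp0 hcp0) hle1t
  have hA0t := hAESM ν₀ true _ (mul_ne_zero hcp0 hcq0) hle0t
  have hA1f := hAESM ν₁ false _ (mul_ne_zero hcq0 hcp0) hle1f
  have hA0f := hAESM ν₀ false _ (mul_ne_zero hcq0 hcq0) hle0f
  -- integrability of the sections
  have hIntSec : ∀ (ν : Measure Z) (b : Bool), IsProbabilityMeasure ν →
      AEStronglyMeasurable Θ (ν.map (fun z => (z, b))) →
      Integrable (fun z => Θ (z, b)) ν := by
    intro ν b hν hA
    haveI := hν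
    refine ⟨hA.comp_aemeasurable (hmb b).aemeasurable, ?_⟩
    exact HasFiniteIntegral.of_bounded (Filter.Eventually.of_forall fun z => hΘbdd (z, b))
  have hi1t := hIntSec ν₁ true inferInstance hA1t
  have hi0t := hIntSec ν₀ true inferInstance hA0t
  have hi1f := hIntSec ν₁ false inferInstance hA1f
  have hi0f := hIntSec ν₀ false inferInstance hA0f
  have hiM : ∀ (ν : Measure Z) (b : Bool), AEStronglyMeasurable Θ (ν.map (fun z => (z, b))) →
      Integrable (fun z => Θ (z, b)) ν → Integrable Θ (ν.map (fun z => (z, b))) := by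
    intro ν b hA hi
    exact (integrable_map_measure hA (hmb b).aemeasurable).mpr hi
  have hm1t := hiM ν₁ true hA1t hi1t
  have hm0t := hiM ν₀ true hA0t hi0t
  have hm1f := hiM ν₁ false hA1f hi1f
  have hm0f := hiM ν₀ false hA0f hi0f
  -- integral of Θ with respect to D
  have hID : ∫ q, Θ q ∂D = p • (∫ z, Θ (z, true) ∂ν₁) + (1 - p) • ∫ z, Θ (z, false) ∂ν₀ := by
    rw [hD, integral_add_measure (hm1t.smul_measure hcpne) (hm0f.smul_measure hcqne),
      integral_smul_measure, integral_smul_measure,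
      integral_map hmt.aemeasurable hA1t, integral_map hmf.aemeasurable hA0f,
      ENNReal.toReal_ofReal hp0', ENNReal.toReal_ofReal hq0']
  -- integral of Θ with respect to the product of the marginals
  have hIP : ∫ q, Θ q ∂((D.map Prod.fst).prod (D.map Prod.snd)) =
      ((p * p) • (∫ z, Θ (z, true) ∂ν₁) + (p * (1 - p)) • (∫ z, Θ (z, true) ∂ν₀)) +
      (((1 - p) * p) • (∫ z, Θ (z, false) ∂ν₁) +
        ((1 - p) * (1 - p)) • ∫ z, Θ (z, false) ∂ν₀) := by
    have iA := hm1t.smul_measure (ENNReal.mul_ne_top hcpne hcpne)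
    have iB := hm0t.smul_measure (ENNReal.mul_ne_top hcpne hcqne)
    have iC := hm1f.smul_measure (ENNReal.mul_ne_top hcqne hcpne)
    have iD := hm0f.smul_measure (ENNReal.mul_ne_top hcqne hcqne)
    rw [hprodD, integral_add_measure (iA.add_measure iB) (iC.add_measure iD),
      integral_add_measure iA iB, integral_add_measure iC iD,
      integral_smul_measure, integral_smul_measure, integral_smul_measure, integral_smul_measure,
      integral_map hmt.aemeasurable hA1t, integral_map hmt.aemeasurable hA0t,
      integral_map hmf.aemeasurable hA1f, integral_map hmf.aemeasurable hA0f,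
      ENNReal.toReal_mul, ENNReal.toReal_mul, ENNReal.toReal_mul, ENNReal.toReal_mul,
      ENNReal.toReal_ofReal hp0', ENNReal.toReal_ofReal hq0']
  set a1 := ∫ z, Θ (z, true) ∂ν₁ with ha1
  set a0 := ∫ z, Θ (z, true) ∂ν₀ with ha0
  set f1 := ∫ z, Θ (z, false) ∂ν₁ with hf1
  set f0 := ∫ z, Θ (z, false) ∂ν₀ with hf0
  set m1 := ∫ z, Φ z ∂ν₁ with hm1
  set m0 := ∫ z, Φ z ∂ν₀ with hm0
  -- generic inner product formula
  have hIPf : ∀ (μ ν : Measure Z) (b b' : Bool), Integrable (fun z => Θ (z, b)) μ →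
      Integrable (fun z => Θ (z, b')) ν → Integrable Φ μ → Integrable Φ ν →
      (inner ℝ (∫ z, Θ (z, b) ∂μ) (∫ z, Θ (z, b') ∂ν) : ℝ) =
        l b b' * inner ℝ (∫ z, Φ z ∂μ) (∫ z, Φ z ∂ν) := by
    intro μ ν b b' h1 h2 h3 h4
    rw [inner_integral_integral h1 h2, inner_integral_integral h3 h4]
    have hthis : ∀ z z' : Z, (inner ℝ (Θ (z, b)) (Θ (z', b')) : ℝ) =
        (inner ℝ (Φ z) (Φ z') : ℝ) * l b b' := by
      intro z z'
      rw [hΘ (z, b) (z', b')]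
      simp [hk]
    simp_rw [hthis, integral_mul_const]
    ring
  have hl_tt : l true true = 1 := by simp [hl]
  have hl_ff : l false false = 1 := by simp [hl]
  have hl_tf : l true false = 0 := by simp [hl]
  have hl_ft : l false true = 0 := by simp [hl]
  set u := a1 - a0 with hu
  set v := f0 - f1 with hv
  have huu : (inner ℝ u u : ℝ) = ‖m1 - m0‖ ^ 2 := by
    rw [hu, ← real_inner_self_eq_norm_sq]
    simp only [inner_sub_left, inner_sub_right]
    rw [hIPf ν₁ ν₁ true true hi1t hi1t hintΦ₁ hintΦ₁,
      hIPf ν₁ ν₀ true true hi1t hi0t hintΦ₁ hintΦ₀,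
      hIPf ν₀ ν₁ true true hi0t hi1t hintΦ₀ hintΦ₁,
      hIPf ν₀ ν₀ true true hi0t hi0t hintΦ₀ hintΦ₀, hl_tt]
    ring
  have hvv : (inner ℝ v v : ℝ) = ‖m1 - m0‖ ^ 2 := by
    rw [hv, ← real_inner_self_eq_norm_sq]
    simp only [inner_sub_left, inner_sub_right]
    rw [hIPf ν₀ ν₀ false false hi0f hi0f hintΦ₀ hintΦ₀,
      hIPf ν₀ ν₁ false false hi0f hi1f hintΦ₀ hintΦ₁,
      hIPf ν₁ ν₀ false false hi1f hi0f hintΦ₁ hintΦ₀,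
      hIPf ν₁ ν₁ false false hi1f hi1f hintΦ₁ hintΦ₁, hl_ff]
    have hsymm := real_inner_comm m1 m0
    linarith
  have huv : (inner ℝ u v : ℝ) = 0 := by
    rw [hu, hv]
    simp only [inner_sub_left, inner_sub_right]
    rw [hIPf ν₁ ν₀ true false hi1t hi0f hintΦ₁ hintΦ₀,
      hIPf ν₁ ν₁ true false hi1t hi1f hintΦ₁ hintΦ₁,
      hIPf ν₀ ν₀ true false hi0t hi0f hintΦ₀ hintΦ₀,
      hIPf ν₀ ν₁ true false hi0t hi1f hintΦ₀ hintΦ₁, hl_tf]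
    ring
  -- the difference of the two integrals
  have hdiff : (∫ q, Θ q ∂D) - ∫ q, Θ q ∂((D.map Prod.fst).prod (D.map Prod.snd)) =
      (p * (1 - p)) • (u + v) := by
    rw [hID, hIP, hu, hv]
    module
  have hnorm : HSIC = (p * (1 - p)) * ‖u + v‖ := by
    rw [hHSIC, hdiff, norm_smul, Real.norm_eq_abs,
      abs_of_nonneg (mul_nonneg hp0' hq0')]
  have hMMD0 : 0 ≤ MMD := hMMD ▸ norm_nonneg _
  have hsq : ‖u + v‖ ^ 2 = 2 * MMD ^ 2 := by
    rw [← real_inner_self_eq_norm_sq]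
    simp only [inner_add_left, inner_add_right]
    have hvu : (inner ℝ v u : ℝ) = 0 := by rw [real_inner_comm]; exact huv
    rw [huu, hvv, huv, hvu, hMMD]
    ring
  have huvn : ‖u + v‖ = Real.sqrt 2 * MMD := by
    have h2 : (Real.sqrt 2 * MMD) ^ 2 = 2 * MMD ^ 2 := by
      rw [mul_pow, Real.sq_sqrt (by norm_num : (0:ℝ) ≤ 2)]
    calc ‖u + v‖ = Real.sqrt (‖u + v‖ ^ 2) := (Real.sqrt_sq (norm_nonneg _)).symm
      _ = Real.sqrt ((Real.sqrt 2 * MMD) ^ 2) := by rw [hsq, h2]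
      _ = Real.sqrt 2 * MMD := Real.sqrt_sq (mul_nonneg (Real.sqrt_nonneg 2) hMMD0)
  rw [hnorm, huvn]
  ring
end
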